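/- Inductive convolution estimate: Fix μ > 0, α, β ≥ 0, and let k₁(x,y) = μ^{-α} max(x,y)^β e^{-μ(x+y)} and k₂(x,y) = (μx + μ^{-1}) e^{-μ|x-y|}. Then the convolution ∫_0^1 k₁(x,z) k₂(z,y) dz is bounded by a finite sum Σ c_{α'β'} μ^{-α'} max(x,y)^{β'} e^{-μ(x+y)} over pairs (α', β') with α' + β' ≥ α + β + 1, with constants c_{α'β'} independent of μ ≥ μ₀ > 0 and of x, y ∈ [0,1]. -/

import Mathlib

open MeasureTheory

/-- Bound `u^s e^{-u} ≤ N! + 1` for `0 ≤ s ≤ N`. -/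
private lemma aux_rpow_mul_exp_le (N : ℕ) {s u : ℝ} (hs : 0 ≤ s) (hsN : s ≤ N) (hu : 0 ≤ u) :
    u ^ s * Real.exp (-u) ≤ (N.factorial : ℝ) + 1 := by
  have hfac : (1:ℝ) ≤ N.factorial := by exact_mod_cast Nat.one_le_iff_ne_zero.mpr (Nat.factorial_pos N).ne'
  rcases le_total u 1 with h | h
  · have h1 : u ^ s ≤ 1 := Real.rpow_le_one hu h hs
    have h2 : Real.exp (-u) ≤ 1 := Real.exp_le_one_iff.mpr (by linarith)
    have h0 : 0 ≤ u ^ s := Real.rpow_nonneg hu s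
    nlinarith
  · have h1 : u ^ s ≤ u ^ (N:ℝ) := Real.rpow_le_rpow_of_exponent_le h hsN
    rw [Real.rpow_natCast] at h1
    have h3 := Real.pow_div_factorial_le_exp (x := u) (by linarith) N
    rw [div_le_iff₀ (by positivity)] at h3
    calc u ^ s * Real.exp (-u) ≤ (Real.exp u * N.factorial) * Real.exp (-u) := by
          apply mul_le_mul_of_nonneg_right (h1.trans h3) (Real.exp_pos _).le
      _ = (N.factorial : ℝ) := by rw [mul_comm (Real.exp u), mul_assoc, ← Real.exp_add]; simp
      _ ≤ (N.factorial : ℝ) + 1 := by linarith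

/-- `(a+b)^p ≤ 2^p (a^p + b^p)`. -/
private lemma aux_rpow_add_le {a b p : ℝ} (ha : 0 ≤ a) (hb : 0 ≤ b) (hp : 0 ≤ p) :
    (a + b) ^ p ≤ 2 ^ p * (a ^ p + b ^ p) := by
  have h2 : (0:ℝ) ≤ 2 := by norm_num
  rcases le_total a b with h | h
  · calc (a + b) ^ p ≤ (2 * b) ^ p := Real.rpow_le_rpow (by linarith) (by linarith) hp
      _ = 2 ^ p * b ^ p := Real.mul_rpow h2 hb
      _ ≤ 2 ^ p * (a ^ p + b ^ p) := by
          have := Real.rpow_nonneg ha p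
          have := Real.rpow_nonneg (h2 : (0:ℝ) ≤ 2) p
          nlinarith
  · calc (a + b) ^ p ≤ (2 * a) ^ p := Real.rpow_le_rpow (by linarith) (by linarith) hp
      _ = 2 ^ p * a ^ p := Real.mul_rpow h2 ha
      _ ≤ 2 ^ p * (a ^ p + b ^ p) := by
          have := Real.rpow_nonneg hb p
          have := Real.rpow_nonneg (h2 : (0:ℝ) ≤ 2) p
          nlinarith

/-- `∫_a^b e^{-μ(z-a)} dz ≤ μ⁻¹`. -/
private lemma aux_integral_exp_le {μ a b : ℝ} (hμ : 0 < μ) (hab : a ≤ b) :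
    ∫ z in a..b, Real.exp (-μ * (z - a)) ≤ μ⁻¹ := by
  have hd : ∀ z ∈ Set.uIcc a b,
      HasDerivAt (fun w => -μ⁻¹ * Real.exp (-μ * (w - a))) (Real.exp (-μ * (z - a))) z := by
    intro z _
    have h1 : HasDerivAt (fun w : ℝ => -μ * (w - a)) (-μ) z := by
      simpa using ((hasDerivAt_id z).sub_const a).const_mul (-μ)
    have h2 := (h1.exp).const_mul (-μ⁻¹)
    refine h2.congr_deriv ?_
    rw [mul_comm (Real.exp _), ← mul_assoc, neg_mul_neg, inv_mul_cancel₀ hμ.ne', one_mul]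
  rw [intervalIntegral.integral_eq_sub_of_hasDerivAt hd
    ((Real.continuous_exp.comp (by continuity)).intervalIntegrable a b)]
  have h3 : (0:ℝ) < Real.exp (-μ * (b - a)) := Real.exp_pos _
  have h4 : (0:ℝ) < μ⁻¹ := inv_pos.mpr hμ
  simp only [sub_self, mul_zero, Real.exp_zero]
  nlinarith

/-- main middle estimate for the `z ≥ y` region. -/
private lemma aux_middle {C μ m u β : ℝ} (hβ : 0 ≤ β) (hμ : 0 < μ) (hm : 0 ≤ m) (hu : 0 ≤ u)
    (hC : 1 ≤ C)
    (h1 : u * Real.exp (-u) ≤ C) (h2 : u ^ β * Real.exp (-u) ≤ C)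
    (h3 : (u ^ β * u) * Real.exp (-u) ≤ C) :
    (m ^ β + μ ^ (-β) * u ^ β) * ((μ * m + u + μ⁻¹) * (Real.exp (-u) * Real.exp (-u)))
      ≤ C * (μ * (m ^ β * m) + m ^ β + μ⁻¹ * m ^ β + μ ^ (-β) * (μ * m) + μ ^ (-β)
          + μ ^ (-β) * μ⁻¹) * Real.exp (-u) := by
  set E := Real.exp (-u) with hE
  have hE0 : (0:ℝ) < E := Real.exp_pos _
  have hE1 : E ≤ 1 := Real.exp_le_one_iff.mpr (by linarith)
  have huβ : 0 ≤ u ^ β := Real.rpow_nonneg hu β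
  have hmβ : 0 ≤ m ^ β := Real.rpow_nonneg hm β
  have hμβ : 0 ≤ μ ^ (-β) := Real.rpow_nonneg hμ.le _
  have key : ∀ a w : ℝ, 0 ≤ a → w * E ≤ C → a * ((w * E) * E) ≤ C * a * E := by
    intro a w ha hw
    calc a * ((w * E) * E) = (w * E) * (a * E) := by ring
      _ ≤ C * (a * E) := mul_le_mul_of_nonneg_right hw (by positivity)
      _ = C * a * E := by ring
  have k1 : ∀ a : ℝ, 0 ≤ a → a * (E * E) ≤ C * a * E := by
    intro a ha
    have : a * (((1:ℝ) * E) * E) ≤ C * a * E := key a 1 ha (by linarith)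
    linarith [this, (by ring : a * (((1:ℝ) * E) * E) = a * (E * E))]
  have t1 : (m ^ β * (μ * m)) * (E * E) ≤ C * (m ^ β * (μ * m)) * E := k1 _ (by positivity)
  have t2 : m ^ β * ((u * E) * E) ≤ C * (m ^ β) * E := key _ _ hmβ h1
  have t3 : (m ^ β * μ⁻¹) * (E * E) ≤ C * (m ^ β * μ⁻¹) * E := k1 _ (by positivity)
  have t4 : (μ ^ (-β) * (μ * m)) * ((u ^ β * E) * E) ≤ C * (μ ^ (-β) * (μ * m)) * E :=
    key _ _ (by positivity) h2
  have t5 : μ ^ (-β) * (((u ^ β * u) * E) * E) ≤ C * (μ ^ (-β)) * E := key _ _ hμβ h3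
  have t6 : (μ ^ (-β) * μ⁻¹) * ((u ^ β * E) * E) ≤ C * (μ ^ (-β) * μ⁻¹) * E :=
    key _ _ (by positivity) h2
  calc (m ^ β + μ ^ (-β) * u ^ β) * ((μ * m + u + μ⁻¹) * (E * E))
      = (m ^ β * (μ * m)) * (E * E) + m ^ β * ((u * E) * E) + (m ^ β * μ⁻¹) * (E * E)
        + (μ ^ (-β) * (μ * m)) * ((u ^ β * E) * E) + μ ^ (-β) * (((u ^ β * u) * E) * E)
        + (μ ^ (-β) * μ⁻¹) * ((u ^ β * E) * E) := by ring
    _ ≤ C * (m ^ β * (μ * m)) * E + C * (m ^ β) * E + C * (m ^ β * μ⁻¹) * E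
        + C * (μ ^ (-β) * (μ * m)) * E + C * (μ ^ (-β)) * E + C * (μ ^ (-β) * μ⁻¹) * E := by
        gcongr 
    _ = C * (μ * (m ^ β * m) + m ^ β + μ⁻¹ * m ^ β + μ ^ (-β) * (μ * m) + μ ^ (-β)
          + μ ^ (-β) * μ⁻¹) * E := by ring

set_option maxHeartbeats 2000000 in
/-- Inductive convolution estimate: for `k₁(x,y) = μ^{-α} max(x,y)^β e^{-μ(x+y)}` and
`k₂(x,y) = (μx + μ⁻¹) e^{-μ|x-y|}`, the convolution `∫_0^1 k₁(x,z) k₂(z,y) dz` is bounded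
by a finite sum `∑ c_i μ^{-α'_i} max(x,y)^{β'_i} e^{-μ(x+y)}` with `α'_i + β'_i ≥ α+β+1`,
the constants being independent of `μ ≥ μ₀` and of `x, y ∈ [0,1]`. -/
theorem stmt_19 (μ₀ : ℝ) (hμ₀ : 0 < μ₀) (α β : ℝ) (hα : 0 ≤ α) (hβ : 0 ≤ β) :
    ∃ (n : ℕ) (α' β' c : Fin n → ℝ),
      (∀ i, α + β + 1 ≤ α' i + β' i) ∧
      ∀ μ : ℝ, μ₀ ≤ μ → ∀ x ∈ Set.Icc (0 : ℝ) 1, ∀ y ∈ Set.Icc (0 : ℝ) 1,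
        (∫ z in (0 : ℝ)..1,
            (μ ^ (-α) * (max x z) ^ β * Real.exp (-μ * (x + z))) *
              ((μ * z + μ⁻¹) * Real.exp (-μ * |z - y|)))
          ≤ ∑ i, c i * μ ^ (-(α' i)) * (max x y) ^ (β' i) * Real.exp (-μ * (x + y)) := by
  set N : ℕ := ⌈β⌉₊ + 1 with hNdef
  set C : ℝ := (N.factorial : ℝ) + 1 with hCdef
  have hfac1 : (1:ℝ) ≤ (N.factorial : ℝ) := by
    exact_mod_cast Nat.one_le_iff_ne_zero.mpr (Nat.factorial_pos N).ne'
  have hC1 : (1:ℝ) ≤ C := by rw [hCdef]; linarith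
  have hC0 : (0:ℝ) ≤ C := by linarith
  have hceil : β ≤ (⌈β⌉₊ : ℝ) := Nat.le_ceil β
  have hβN : β ≤ (N:ℝ) := by rw [hNdef]; push_cast; linarith
  have h1N : (1:ℝ) ≤ (N:ℝ) := by
    rw [hNdef]; push_cast
    have : (0:ℝ) ≤ (⌈β⌉₊:ℝ) := Nat.cast_nonneg _
    linarith
  have hβ1N : β + 1 ≤ (N:ℝ) := by rw [hNdef]; push_cast; linarith
  refine ⟨8, ![α-1, α+1, α, α+1, α+2, α+β, α+β+1, α+β+2],
            ![β+2, β+1, β+1, β, β, 1, 0, 0],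
            ![1, 1, 2^β*C, 2^β*C, 2^β*C, 2^β*C, 2^β*C, 2^β*C], ?_, ?_⟩
  · intro i; fin_cases i <;> norm_num <;> linarith
  intro μ hμ x hx y hy
  obtain ⟨hx0, hx1⟩ := hx
  obtain ⟨hy0, hy1⟩ := hy
  have hμ0 : (0:ℝ) < μ := lt_of_lt_of_le hμ₀ hμ
  set m := max x y with hmdef
  have hm0 : (0:ℝ) ≤ m := le_trans hx0 (le_max_left x y)
  have hym : y ≤ m := le_max_right x y
  have hxm : x ≤ m := le_max_left x y
  have hmβ0 : (0:ℝ) ≤ m ^ β := Real.rpow_nonneg hm0 β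
  have hμβ0 : (0:ℝ) ≤ μ ^ (-β) := Real.rpow_nonneg hμ0.le _
  have hμα0 : (0:ℝ) ≤ μ ^ (-α) := Real.rpow_nonneg hμ0.le _
  have h2β0 : (0:ℝ) ≤ (2:ℝ) ^ β := Real.rpow_nonneg (by norm_num) β
  -- continuity and integrability of the integrand
  have hcont : Continuous fun z : ℝ =>
      (μ ^ (-α) * (max x z) ^ β * Real.exp (-μ * (x + z))) *
        ((μ * z + μ⁻¹) * Real.exp (-μ * |z - y|)) := by
    apply Continuous.mul
    · exact (continuous_const.mul ((continuous_const.max continuous_id).rpow_const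
        (fun z => Or.inr hβ))).mul (Real.continuous_exp.comp (by continuity))
    · exact ((continuous_const.mul continuous_id).add continuous_const).mul
        (Real.continuous_exp.comp (by continuity))
  have hInt : ∀ a b : ℝ, IntervalIntegrable (fun z =>
      (μ ^ (-α) * (max x z) ^ β * Real.exp (-μ * (x + z))) *
        ((μ * z + μ⁻¹) * Real.exp (-μ * |z - y|))) volume a b :=
    fun a b => hcont.intervalIntegrable a b
  set Ex : ℝ := Real.exp (-μ * (x + y)) with hExdef
  have hEx0 : (0:ℝ) < Ex := Real.exp_pos _
  set K1 : ℝ := μ ^ (-α) * m ^ β * ((μ * m + μ⁻¹) * Ex) with hK1def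
  have hK10 : (0:ℝ) ≤ K1 := by
    apply mul_nonneg (mul_nonneg hμα0 hmβ0)
    apply mul_nonneg _ hEx0.le
    have : (0:ℝ) ≤ μ * m := mul_nonneg hμ0.le hm0
    have : (0:ℝ) ≤ μ⁻¹ := by positivity
    linarith
  -- Piece 1 : on [0, y]
  have hp1 : (∫ z in (0:ℝ)..y,
      (μ ^ (-α) * (max x z) ^ β * Real.exp (-μ * (x + z))) *
        ((μ * z + μ⁻¹) * Real.exp (-μ * |z - y|))) ≤ y * K1 := by
    have hpt : ∀ z ∈ Set.Icc (0:ℝ) y,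
        (μ ^ (-α) * (max x z) ^ β * Real.exp (-μ * (x + z))) *
          ((μ * z + μ⁻¹) * Real.exp (-μ * |z - y|)) ≤ K1 := by
      intro z hz
      obtain ⟨hz0, hzy⟩ := hz
      have habs : |z - y| = -(z - y) := abs_of_nonpos (by linarith)
      rw [habs]
      calc (μ ^ (-α) * (max x z) ^ β * Real.exp (-μ * (x + z))) *
            ((μ * z + μ⁻¹) * Real.exp (-μ * -(z - y)))
          = μ ^ (-α) * ((max x z) ^ β * ((μ * z + μ⁻¹) *
              (Real.exp (-μ * (x + z)) * Real.exp (-μ * -(z - y))))) := by ring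
        _ = μ ^ (-α) * ((max x z) ^ β * ((μ * z + μ⁻¹) * Ex)) := by
            rw [← Real.exp_add, show -μ * (x + z) + -μ * -(z - y) = -μ * (x + y) by ring, hExdef]
        _ ≤ μ ^ (-α) * (m ^ β * ((μ * m + μ⁻¹) * Ex)) := by
            apply mul_le_mul_of_nonneg_left _ hμα0
            have h1 : (max x z) ^ β ≤ m ^ β :=
              Real.rpow_le_rpow (le_trans hx0 (le_max_left x z)) (max_le_max le_rfl hzy) hβ
            have h2 : μ * z + μ⁻¹ ≤ μ * m + μ⁻¹ := by
              have hzm : z ≤ m := hzy.trans hym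
              have := mul_le_mul_of_nonneg_left hzm hμ0.le
              linarith
            have h3 : (0:ℝ) ≤ (μ * z + μ⁻¹) * Ex := by
              apply mul_nonneg _ hEx0.le
              have : (0:ℝ) ≤ μ * z := mul_nonneg hμ0.le hz0
              have : (0:ℝ) ≤ μ⁻¹ := by positivity
              linarith
            exact mul_le_mul h1 (mul_le_mul_of_nonneg_right h2 hEx0.le) h3
              (Real.rpow_nonneg hm0 β)
        _ = K1 := by rw [hK1def]; ring
    calc (∫ z in (0:ℝ)..y,
        (μ ^ (-α) * (max x z) ^ β * Real.exp (-μ * (x + z))) *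
          ((μ * z + μ⁻¹) * Real.exp (-μ * |z - y|)))
        ≤ ∫ _z in (0:ℝ)..y, K1 :=
          intervalIntegral.integral_mono_on hy0 (hInt 0 y) intervalIntegrable_const hpt
      _ = y * K1 := by rw [intervalIntegral.integral_const]; simp
  -- Piece 2 : on [y, 1]
  set DD : ℝ := μ * (m ^ β * m) + m ^ β + μ⁻¹ * m ^ β + μ ^ (-β) * (μ * m) + μ ^ (-β)
      + μ ^ (-β) * μ⁻¹ with hDDdef
  have hDD0 : (0:ℝ) ≤ DD := by
    rw [hDDdef]
    have h1 : (0:ℝ) ≤ μ⁻¹ := by positivity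
    have h2 : (0:ℝ) ≤ μ * (m ^ β * m) := mul_nonneg hμ0.le (mul_nonneg hmβ0 hm0)
    have h3 : (0:ℝ) ≤ μ⁻¹ * m ^ β := mul_nonneg h1 hmβ0
    have h4 : (0:ℝ) ≤ μ ^ (-β) * (μ * m) := mul_nonneg hμβ0 (mul_nonneg hμ0.le hm0)
    have h5 : (0:ℝ) ≤ μ ^ (-β) * μ⁻¹ := mul_nonneg hμβ0 h1
    linarith
  set G : ℝ := μ ^ (-α) * 2 ^ β * Ex * (C * DD) with hGdef
  have hG0 : (0:ℝ) ≤ G := by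
    rw [hGdef]
    exact mul_nonneg (mul_nonneg (mul_nonneg hμα0 h2β0) hEx0.le) (mul_nonneg hC0 hDD0)
  have hp2 : (∫ z in y..(1:ℝ),
      (μ ^ (-α) * (max x z) ^ β * Real.exp (-μ * (x + z))) *
        ((μ * z + μ⁻¹) * Real.exp (-μ * |z - y|))) ≤ G * μ⁻¹ := by
    have hpt2 : ∀ z ∈ Set.Icc y (1:ℝ),
        (μ ^ (-α) * (max x z) ^ β * Real.exp (-μ * (x + z))) *
          ((μ * z + μ⁻¹) * Real.exp (-μ * |z - y|)) ≤ G * Real.exp (-μ * (z - y)) := by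
      intro z hz
      obtain ⟨hzy, hz1⟩ := hz
      have ht : (0:ℝ) ≤ z - y := by linarith
      have hz0 : (0:ℝ) ≤ z := le_trans hy0 hzy
      have habs : |z - y| = z - y := abs_of_nonneg ht
      set u : ℝ := μ * (z - y) with hudef
      have hu : (0:ℝ) ≤ u := mul_nonneg hμ0.le ht
      have haux1 : u * Real.exp (-u) ≤ C := by
        have h := aux_rpow_mul_exp_le N (s := 1) zero_le_one h1N hu
        rwa [Real.rpow_one] at h
      have hauxβ : u ^ β * Real.exp (-u) ≤ C := aux_rpow_mul_exp_le N hβ hβN hu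
      have hauxβ1 : (u ^ β * u) * Real.exp (-u) ≤ C := by
        have h := aux_rpow_mul_exp_le N (s := β + 1) (by linarith) hβ1N hu
        rwa [Real.rpow_add_of_nonneg hu hβ zero_le_one, Real.rpow_one] at h
      have htβ : (z - y) ^ β = μ ^ (-β) * u ^ β := by
        rw [hudef, Real.mul_rpow hμ0.le ht, ← mul_assoc, ← Real.rpow_add hμ0,
          neg_add_cancel, Real.rpow_zero, one_mul]
      have hA : (max x z) ^ β ≤ 2 ^ β * (m ^ β + μ ^ (-β) * u ^ β) := by
        rw [← htβ]
        calc (max x z) ^ β ≤ (m + (z - y)) ^ β :=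
              Real.rpow_le_rpow (le_trans hx0 (le_max_left x z))
                (max_le (by linarith) (by linarith)) hβ
          _ ≤ 2 ^ β * (m ^ β + (z - y) ^ β) := aux_rpow_add_le hm0 ht hβ
      have hB : μ * z + μ⁻¹ ≤ μ * m + u + μ⁻¹ := by
        have hzm : z ≤ m + (z - y) := by linarith
        have := mul_le_mul_of_nonneg_left hzm hμ0.le
        rw [hudef]; nlinarith
      have hexp : Real.exp (-μ * (x + z)) * Real.exp (-μ * (z - y))
          = Ex * (Real.exp (-u) * Real.exp (-u)) := by
        rw [hExdef, ← Real.exp_add, ← Real.exp_add, ← Real.exp_add, hudef]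
        congr 1; ring
      calc (μ ^ (-α) * (max x z) ^ β * Real.exp (-μ * (x + z))) *
            ((μ * z + μ⁻¹) * Real.exp (-μ * |z - y|))
          = μ ^ (-α) * ((max x z) ^ β * ((μ * z + μ⁻¹) *
              (Real.exp (-μ * (x + z)) * Real.exp (-μ * (z - y))))) := by rw [habs]; ring
        _ = μ ^ (-α) * ((max x z) ^ β * ((μ * z + μ⁻¹) *
              (Ex * (Real.exp (-u) * Real.exp (-u))))) := by rw [hexp]
        _ ≤ μ ^ (-α) * ((2 ^ β * (m ^ β + μ ^ (-β) * u ^ β)) * ((μ * m + u + μ⁻¹) *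
              (Ex * (Real.exp (-u) * Real.exp (-u))))) := by
            apply mul_le_mul_of_nonneg_left _ hμα0
            have hzpos : (0:ℝ) ≤ μ * z + μ⁻¹ := by
              have : (0:ℝ) ≤ μ * z := mul_nonneg hμ0.le hz0
              have : (0:ℝ) ≤ μ⁻¹ := by positivity
              linarith
            have hEE : (0:ℝ) ≤ Ex * (Real.exp (-u) * Real.exp (-u)) := by positivity
            have hrhs0 : (0:ℝ) ≤ 2 ^ β * (m ^ β + μ ^ (-β) * u ^ β) := by
              have : (0:ℝ) ≤ u ^ β := Real.rpow_nonneg hu β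
              have : (0:ℝ) ≤ μ ^ (-β) * u ^ β := mul_nonneg hμβ0 (by assumption)
              have : (0:ℝ) ≤ m ^ β + μ ^ (-β) * u ^ β := by linarith
              exact mul_nonneg h2β0 this
            exact mul_le_mul hA (mul_le_mul_of_nonneg_right hB hEE)
              (mul_nonneg hzpos hEE) hrhs0
        _ = (μ ^ (-α) * 2 ^ β * Ex) * ((m ^ β + μ ^ (-β) * u ^ β) *
              ((μ * m + u + μ⁻¹) * (Real.exp (-u) * Real.exp (-u)))) := by ring
        _ ≤ (μ ^ (-α) * 2 ^ β * Ex) * (C * DD * Real.exp (-u)) := by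
            apply mul_le_mul_of_nonneg_left _ (by positivity)
            rw [hDDdef]
            exact aux_middle hβ hμ0 hm0 hu hC1 haux1 hauxβ hauxβ1
        _ = G * Real.exp (-μ * (z - y)) := by
            rw [hGdef, hudef, show -(μ * (z - y)) = -μ * (z - y) by ring]; ring
    calc (∫ z in y..(1:ℝ),
        (μ ^ (-α) * (max x z) ^ β * Real.exp (-μ * (x + z))) *
          ((μ * z + μ⁻¹) * Real.exp (-μ * |z - y|)))
        ≤ ∫ z in y..(1:ℝ), G * Real.exp (-μ * (z - y)) := by
          apply intervalIntegral.integral_mono_on hy1 (hInt y 1) _ hpt2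
          exact (continuous_const.mul (Real.continuous_exp.comp (by continuity))).intervalIntegrable y 1
      _ = G * ∫ z in y..(1:ℝ), Real.exp (-μ * (z - y)) :=
          intervalIntegral.integral_const_mul G _
      _ ≤ G * μ⁻¹ := mul_le_mul_of_nonneg_left (aux_integral_exp_le hμ0 hy1) hG0
  -- combine
  have hcomb : (∫ z in (0:ℝ)..1,
      (μ ^ (-α) * (max x z) ^ β * Real.exp (-μ * (x + z))) *
        ((μ * z + μ⁻¹) * Real.exp (-μ * |z - y|))) ≤ m * K1 + G * μ⁻¹ := by
    rw [← intervalIntegral.integral_add_adjacent_intervals (hInt 0 y) (hInt y 1)]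
    have hyK : y * K1 ≤ m * K1 := mul_le_mul_of_nonneg_right hym hK10
    linarith [hp1, hp2]
  refine le_trans hcomb (le_of_eq ?_)
  -- the final bookkeeping identity
  have hμne : μ ≠ 0 := ne_of_gt hμ0
  have e1 : μ ^ (-(α-1)) = μ ^ (-α) * μ := by
    rw [show -(α-1) = -α + 1 by ring, Real.rpow_add hμ0, Real.rpow_one]
  have e2 : μ ^ (-(α+1)) = μ ^ (-α) * μ⁻¹ := by
    rw [show -(α+1) = -α + (-1) by ring, Real.rpow_add hμ0, Real.rpow_neg_one]
  have e3 : μ ^ (-(α+2)) = μ ^ (-α) * μ⁻¹ * μ⁻¹ := by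
    rw [show -(α+2) = -α + (-1) + (-1) by ring, Real.rpow_add hμ0, Real.rpow_add hμ0,
      Real.rpow_neg_one]
  have e4 : μ ^ (-(α+β)) = μ ^ (-α) * μ ^ (-β) := by
    rw [show -(α+β) = -α + (-β) by ring, Real.rpow_add hμ0]
  have e5 : μ ^ (-(α+β+1)) = μ ^ (-α) * μ ^ (-β) * μ⁻¹ := by
    rw [show -(α+β+1) = -α + (-β) + (-1) by ring, Real.rpow_add hμ0, Real.rpow_add hμ0,
      Real.rpow_neg_one]
  have e6 : μ ^ (-(α+β+2)) = μ ^ (-α) * μ ^ (-β) * μ⁻¹ * μ⁻¹ := by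
    rw [show -(α+β+2) = -α + (-β) + (-1) + (-1) by ring, Real.rpow_add hμ0, Real.rpow_add hμ0,
      Real.rpow_add hμ0, Real.rpow_neg_one]
  have f1 : m ^ (β+2) = m ^ β * m * m := by
    rw [show β+2 = β+1+1 by ring, Real.rpow_add_of_nonneg hm0 (by linarith) zero_le_one,
      Real.rpow_add_of_nonneg hm0 hβ zero_le_one, Real.rpow_one]
  have f2 : m ^ (β+1) = m ^ β * m := by
    rw [Real.rpow_add_of_nonneg hm0 hβ zero_le_one, Real.rpow_one]
  simp only [Fin.sum_univ_succ, Fin.sum_univ_zero, Matrix.cons_val_zero, Matrix.cons_val_succ,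
    e1, e2, e3, e4, e5, e6, f1, f2, Real.rpow_one, Real.rpow_zero, add_zero]
  rw [hK1def, hGdef, hDDdef]
  field_simp
  ring
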